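/- For the 2(j+1)-dimensional Lotka-Volterra system with antisymmetric matrix A built from blocks J_i = [[0,a_i],[-a_i,0]] on the diagonal, off-diagonal 2×2 blocks K^i_k = ((b_i c_k − b_k c_i)/a_{j+1})·1 (all-ones matrix) for 1≤i<k≤j, and last block column L with rows (b_i, c_i) repeated twice, the j functions F_i = (x_{2i−1}+x_{2i})^{a_{j+1}} x_{n−1}^{−c_i} x_n^{b_i} (n = 2j+2) are constants of motion, assuming a_{j+1} ≠ 0. -/

import Mathlib

open Real Finset

/-- i-th component of the gradient of `F` at `x`. -/
noncomputable def grad {n : ℕ} (F : (Fin n → ℝ) → ℝ) (x : Fin n → ℝ) (i : Fin n) : ℝ :=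
  fderiv ℝ F x (Pi.single i 1)

/-- Lie derivative (directional derivative) of `F` along the vector field `f` at `x`. -/
noncomputable def lieDeriv {n : ℕ} (F : (Fin n → ℝ) → ℝ) (f : (Fin n → ℝ) → Fin n → ℝ)
    (x : Fin n → ℝ) : ℝ := ∑ i, grad F x i * f x i

/-- The Poisson bracket {F,G}(x) = Σ_{i,j} A_{ij} x_i x_j ∂_iF ∂_jG. -/
noncomputable def pbracket {n : ℕ} (A : Matrix (Fin n) (Fin n) ℝ)
    (F G : (Fin n → ℝ) → ℝ) (x : Fin n → ℝ) : ℝ :=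
  ∑ i, ∑ j, A i j * x i * x j * grad F x i * grad G x j

/-- The (possibly inhomogeneous) Lotka-Volterra vector field
`f_i(x) = x_i (r_i + Σ_j A_{ij} x_j)`. -/
def lvField {n : ℕ} (A : Matrix (Fin n) (Fin n) ℝ) (r : Fin n → ℝ)
    (x : Fin n → ℝ) (i : Fin n) : ℝ := x i * (r i + ∑ j, A i j * x j)

/-- The antisymmetric matrix of the even-dimensional type [j,0,0] LV system:
diagonal 2×2 blocks J_p = [[0,a_p],[-a_p,0]] (p = 1,…,j), off-diagonal 2×2 blocks
K^p_q = ((b_p c_q − b_q c_p)/a_{j+1})·𝟙 for p < q, last block column L with rows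
(b_p, c_p) repeated twice, and final diagonal block J_{j+1} (parameters 1-based). -/
noncomputable def typeJ00Mat (j : ℕ) (a b c : ℕ → ℝ) :
    Matrix (Fin (2 * (j + 1))) (Fin (2 * (j + 1))) ℝ :=
  Matrix.of fun r s =>
    let R := r.val; let S := s.val
    if R = S then 0
    else if R < 2 * j ∧ S < 2 * j then
      (if R / 2 = S / 2 then (if R < S then a (R / 2 + 1) else -a (R / 2 + 1))
       else (b (R / 2 + 1) * c (S / 2 + 1) - b (S / 2 + 1) * c (R / 2 + 1)) / a (j + 1))
    else if R < 2 * j then (if S = 2 * j then b (R / 2 + 1) else c (R / 2 + 1))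
    else if S < 2 * j then -(if R = 2 * j then b (S / 2 + 1) else c (S / 2 + 1))
    else (if R < S then a (j + 1) else -a (j + 1))

/-- The integral F_i = (x_{2i−1}+x_{2i})^{a_{j+1}} x_{n−1}^{−c_i} x_n^{b_i}
of the type [j,0,0] system, for i = 1,…,j (here i : Fin j is 0-based). -/
noncomputable def typeJ00F (j : ℕ) (a b c : ℕ → ℝ) (i : Fin j)
    (y : Fin (2 * (j + 1)) → ℝ) : ℝ :=
  (y ⟨2 * i.val, by have := i.isLt; omega⟩ + y ⟨2 * i.val + 1, by have := i.isLt; omega⟩)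
      ^ a (j + 1)
    * (y ⟨2 * j, by omega⟩) ^ (-(c (i.val + 1)))
    * (y ⟨2 * j + 1, by omega⟩) ^ (b (i.val + 1))

/-- Entry function of `typeJ00Mat` at the level of natural-number indices. -/
noncomputable def matFun (j : ℕ) (a b c : ℕ → ℝ) (R S : ℕ) : ℝ :=
  if R = S then 0
  else if R < 2 * j ∧ S < 2 * j then
    (if R / 2 = S / 2 then (if R < S then a (R / 2 + 1) else -a (R / 2 + 1))
     else (b (R / 2 + 1) * c (S / 2 + 1) - b (S / 2 + 1) * c (R / 2 + 1)) / a (j + 1))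
  else if R < 2 * j then (if S = 2 * j then b (R / 2 + 1) else c (R / 2 + 1))
  else if S < 2 * j then -(if R = 2 * j then b (S / 2 + 1) else c (S / 2 + 1))
  else (if R < S then a (j + 1) else -a (j + 1))

section MatLemmas

variable {j : ℕ} {a b c : ℕ → ℝ} {R S : ℕ}

lemma typeJ00Mat_eq (r s : Fin (2*(j+1))) :
    typeJ00Mat j a b c r s = matFun j a b c r.val s.val := rfl

lemma matDiag : matFun j a b c R R = 0 := by simp [matFun]

lemma matK (hR : R < 2*j) (hS : S < 2*j) (h : R/2 ≠ S/2) :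
    matFun j a b c R S = (b (R/2 + 1) * c (S/2 + 1) - b (S/2 + 1) * c (R/2 + 1)) / a (j+1) := by
  simp only [matFun]
  rw [if_neg (by omega : ¬ R = S), if_pos ⟨hR, hS⟩, if_neg h]

lemma matD1 (hR : R < 2*j) (h : R/2 = S/2) (hlt : R < S) :
    matFun j a b c R S = a (R/2 + 1) := by
  simp only [matFun]
  rw [if_neg (by omega : ¬ R = S), if_pos ⟨hR, by omega⟩, if_pos h, if_pos hlt]

lemma matD2 (hS : S < 2*j) (h : R/2 = S/2) (hlt : S < R) :
    matFun j a b c R S = -a (R/2 + 1) := by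
  simp only [matFun]
  rw [if_neg (by omega : ¬ R = S), if_pos ⟨by omega, hS⟩, if_pos h, if_neg (by omega)]

lemma matL1 (hR : R < 2*j) : matFun j a b c R (2*j) = b (R/2 + 1) := by
  simp only [matFun]
  rw [if_neg (by omega), if_neg (by omega), if_pos hR]
  simp

lemma matL2 (hR : R < 2*j) : matFun j a b c R (2*j+1) = c (R/2 + 1) := by
  simp only [matFun]
  rw [if_neg (by omega), if_neg (by omega), if_pos hR, if_neg (by omega)]

lemma matR1 (hS : S < 2*j) : matFun j a b c (2*j) S = -(b (S/2 + 1)) := by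
  simp only [matFun]
  rw [if_neg (by omega), if_neg (by omega), if_neg (by omega), if_pos hS]
  simp

lemma matR2 (hS : S < 2*j) : matFun j a b c (2*j+1) S = -(c (S/2 + 1)) := by
  simp only [matFun]
  rw [if_neg (by omega), if_neg (by omega), if_neg (by omega), if_pos hS, if_neg (by omega)]

lemma matJ1 : matFun j a b c (2*j) (2*j+1) = a (j+1) := by
  simp only [matFun]
  rw [if_neg (by omega), if_neg (by omega), if_neg (by omega), if_neg (by omega),
    if_pos (by omega)]

lemma matJ2 : matFun j a b c (2*j+1) (2*j) = -a (j+1) := by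
  simp only [matFun]
  rw [if_neg (by omega), if_neg (by omega), if_neg (by omega), if_neg (by omega),
    if_neg (by omega)]

lemma pair_sum (m : ℕ) (g : ℕ → ℝ) :
    ∑ l ∈ Finset.range (2*m), g l = ∑ t ∈ Finset.range m, (g (2*t) + g (2*t+1)) := by
  induction m with
  | zero => simp
  | succ m ih =>
      rw [Finset.sum_range_succ, ← ih, show 2*(m+1) = (2*m+1)+1 by ring,
        Finset.sum_range_succ, Finset.sum_range_succ]
      ring

end MatLemmas

set_option maxHeartbeats 1000000 in
/-- the j functions F_i are constants of motion of the homogeneous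
type [j,0,0] Lotka-Volterra system (a_{j+1} ≠ 0). -/
theorem stmt12 (j : ℕ) (a b c : ℕ → ℝ) (ha : a (j + 1) ≠ 0) (i : Fin j) :
    ∀ x : Fin (2 * (j + 1)) → ℝ, (∀ k, 0 < x k) →
      lieDeriv (typeJ00F j a b c i) (lvField (typeJ00Mat j a b c) 0) x = 0 := by
  intro x hx
  have hI : i.val < j := i.isLt
  set P : Fin (2*(j+1)) := ⟨2*i.val, by omega⟩ with hPdef
  set Q : Fin (2*(j+1)) := ⟨2*i.val+1, by omega⟩ with hQdef
  set M : Fin (2*(j+1)) := ⟨2*j, by omega⟩ with hMdef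
  set O : Fin (2*(j+1)) := ⟨2*j+1, by omega⟩ with hOdef
  -- abbreviations
  have huP : 0 < x P + x Q := add_pos (hx P) (hx Q)
  -- the derivative of F
  have hp : HasFDerivAt (fun y : Fin (2*(j+1)) → ℝ => y P)
      (ContinuousLinearMap.proj P : (Fin (2*(j+1)) → ℝ) →L[ℝ] ℝ) x := hasFDerivAt_apply P x
  have hq : HasFDerivAt (fun y : Fin (2*(j+1)) → ℝ => y Q)
      (ContinuousLinearMap.proj Q : (Fin (2*(j+1)) → ℝ) →L[ℝ] ℝ) x := hasFDerivAt_apply Q x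
  have hm : HasFDerivAt (fun y : Fin (2*(j+1)) → ℝ => y M)
      (ContinuousLinearMap.proj M : (Fin (2*(j+1)) → ℝ) →L[ℝ] ℝ) x := hasFDerivAt_apply M x
  have ho : HasFDerivAt (fun y : Fin (2*(j+1)) → ℝ => y O)
      (ContinuousLinearMap.proj O : (Fin (2*(j+1)) → ℝ) →L[ℝ] ℝ) x := hasFDerivAt_apply O x
  have h1 : HasFDerivAt (fun y : Fin (2*(j+1)) → ℝ => (y P + y Q) ^ (a (j+1)))
      (((a (j+1)) * (x P + x Q) ^ ((a (j+1)) - 1)) • (ContinuousLinearMap.proj P + ContinuousLinearMap.proj Q :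
        (Fin (2*(j+1)) → ℝ) →L[ℝ] ℝ)) x :=
    (hp.add hq).rpow_const (Or.inl huP.ne')
  have h2 : HasFDerivAt (fun y : Fin (2*(j+1)) → ℝ => (y M) ^ (-(c (i.val+1))))
      (((-(c (i.val+1))) * (x M) ^ ((-(c (i.val+1))) - 1)) • (ContinuousLinearMap.proj M :
        (Fin (2*(j+1)) → ℝ) →L[ℝ] ℝ)) x :=
    hm.rpow_const (Or.inl (hx M).ne')
  have h3 : HasFDerivAt (fun y : Fin (2*(j+1)) → ℝ => (y O) ^ (b (i.val+1)))
      (((b (i.val+1)) * (x O) ^ ((b (i.val+1)) - 1)) • (ContinuousLinearMap.proj O :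
        (Fin (2*(j+1)) → ℝ) →L[ℝ] ℝ)) x :=
    ho.rpow_const (Or.inl (hx O).ne')
  have hF : HasFDerivAt (typeJ00F j a b c i) _ x := (h1.mul h2).mul h3
  have hgrad : ∀ k, grad (typeJ00F j a b c i) x k =
      (if P = k then (a (j+1)) * (x P + x Q) ^ ((a (j+1))-1) * (x M) ^ (-(c (i.val+1))) * (x O) ^ (b (i.val+1)) else 0)
      + (if Q = k then (a (j+1)) * (x P + x Q) ^ ((a (j+1))-1) * (x M) ^ (-(c (i.val+1))) * (x O) ^ (b (i.val+1)) else 0)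
      + (if M = k then (-(c (i.val+1))) * (x P + x Q) ^ (a (j+1)) * (x M) ^ ((-(c (i.val+1)))-1) * (x O) ^ (b (i.val+1)) else 0)
      + (if O = k then (b (i.val+1)) * (x P + x Q) ^ (a (j+1)) * (x M) ^ (-(c (i.val+1))) * (x O) ^ ((b (i.val+1))-1) else 0) := by
    intro k
    rw [grad, hF.fderiv]
    simp only [ContinuousLinearMap.add_apply, ContinuousLinearMap.smul_apply,
      ContinuousLinearMap.proj_apply, Pi.single_apply, smul_eq_mul, Pi.mul_apply]
    split_ifs <;> ring
  -- nat-indexed coordinates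
  obtain ⟨X, hXdef⟩ : ∃ X : ℕ → ℝ, X = fun l => if h : l < 2*(j+1) then x ⟨l, h⟩ else 0 :=
    ⟨_, rfl⟩
  have hX : ∀ l : Fin (2*(j+1)), x l = X l.val := by
    intro l
    rw [hXdef]
    simp [l.isLt]
  -- generic row sum
  have hrow : ∀ (r : Fin (2*(j+1))),
      (∑ l, typeJ00Mat j a b c r l * x l)
        = ∑ t ∈ Finset.range (j+1),
            (matFun j a b c r.val (2*t) * X (2*t) + matFun j a b c r.val (2*t+1) * X (2*t+1)) := by
    intro r
    have h1 : (∑ l, typeJ00Mat j a b c r l * x l)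
        = ∑ l ∈ Finset.range (2*(j+1)), (fun l => matFun j a b c r.val l * X l) l := by
      rw [← Fin.sum_univ_eq_sum_range]
      exact Finset.sum_congr rfl fun l _ => by rw [typeJ00Mat_eq, hX]
    rw [h1, pair_sum]
  have hmem : i.val ∈ Finset.range j := Finset.mem_range.2 hI
  -- rows P and Q
  have hrowPQ : ∀ (r : Fin (2*(j+1))), r.val / 2 = i.val → r.val < 2*j →
      (∑ l, typeJ00Mat j a b c r l * x l)
        = (∑ t ∈ Finset.range j,
            ((b (i.val+1) * c (t+1) - b (t+1) * c (i.val+1)) / (a (j+1))) * (X (2*t) + X (2*t+1)))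
          + (matFun j a b c r.val (2*i.val) * X (2*i.val)
              + matFun j a b c r.val (2*i.val+1) * X (2*i.val+1))
          + ((b (i.val+1)) * X (2*j) + c (i.val+1) * X (2*j+1)) := by
    intro r hr2 hrlt
    rw [hrow r, Finset.sum_range_succ, matL1 hrlt, matL2 hrlt, hr2]
    have hsum : ∑ t ∈ (Finset.range j).erase i.val,
        (matFun j a b c r.val (2*t) * X (2*t) + matFun j a b c r.val (2*t+1) * X (2*t+1))
        = ∑ t ∈ (Finset.range j).erase i.val,
            ((b (i.val+1) * c (t+1) - b (t+1) * c (i.val+1)) / (a (j+1))) * (X (2*t) + X (2*t+1)) := by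
      refine Finset.sum_congr rfl fun t ht => ?_
      have ht1 : t < j := Finset.mem_range.1 (Finset.mem_of_mem_erase ht)
      have ht2 : t ≠ i.val := Finset.ne_of_mem_erase ht
      rw [matK hrlt (by omega) (by omega), matK hrlt (by omega) (by omega), hr2,
        show 2*t/2 = t by omega, show (2*t+1)/2 = t by omega]
      ring
    calc (∑ t ∈ Finset.range j,
            (matFun j a b c r.val (2*t) * X (2*t) + matFun j a b c r.val (2*t+1) * X (2*t+1)))
          + ((b (i.val+1)) * X (2*j) + c (i.val+1) * X (2*j+1))
        = ((∑ t ∈ (Finset.range j).erase i.val,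
            (matFun j a b c r.val (2*t) * X (2*t) + matFun j a b c r.val (2*t+1) * X (2*t+1)))
          + (matFun j a b c r.val (2*i.val) * X (2*i.val)
              + matFun j a b c r.val (2*i.val+1) * X (2*i.val+1)))
          + ((b (i.val+1)) * X (2*j) + c (i.val+1) * X (2*j+1)) := by
          rw [Finset.sum_erase_add _ _ hmem]
      _ = ((∑ t ∈ (Finset.range j).erase i.val,
            ((b (i.val+1) * c (t+1) - b (t+1) * c (i.val+1)) / (a (j+1))) * (X (2*t) + X (2*t+1)))
          + ((b (i.val+1) * c (i.val+1) - b (i.val+1) * c (i.val+1)) / (a (j+1)))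
              * (X (2*i.val) + X (2*i.val+1)))
          + (matFun j a b c r.val (2*i.val) * X (2*i.val)
              + matFun j a b c r.val (2*i.val+1) * X (2*i.val+1))
          + ((b (i.val+1)) * X (2*j) + c (i.val+1) * X (2*j+1)) := by
          rw [hsum]
          have h0 : ((b (i.val+1) * c (i.val+1) - b (i.val+1) * c (i.val+1)) / (a (j+1)))
              * (X (2*i.val) + X (2*i.val+1)) = 0 := by simp
          rw [h0]
          ring
      _ = (∑ t ∈ Finset.range j,
            ((b (i.val+1) * c (t+1) - b (t+1) * c (i.val+1)) / (a (j+1))) * (X (2*t) + X (2*t+1)))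
          + (matFun j a b c r.val (2*i.val) * X (2*i.val)
              + matFun j a b c r.val (2*i.val+1) * X (2*i.val+1))
          + ((b (i.val+1)) * X (2*j) + c (i.val+1) * X (2*j+1)) := by
          rw [Finset.sum_erase_add _ _ hmem]
  -- the basic coordinate identifications
  have hxP : x P = X (2*i.val) := hX P
  have hxQ : x Q = X (2*i.val+1) := hX Q
  have hxM : x M = X (2*j) := hX M
  have hxO : x O = X (2*j+1) := hX O
  have hSP : (∑ l, typeJ00Mat j a b c P l * x l)
      = (∑ t ∈ Finset.range j,
          ((b (i.val+1) * c (t+1) - b (t+1) * c (i.val+1)) / (a (j+1))) * (X (2*t) + X (2*t+1)))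
        + a (i.val+1) * x Q + ((b (i.val+1)) * x M + c (i.val+1) * x O) := by
    rw [hrowPQ P (by simp [hPdef]) (by simp [hPdef])]
    have e1 : matFun j a b c P.val (2*i.val) = 0 := by
      rw [show P.val = 2*i.val from rfl]; exact matDiag
    have e2 : matFun j a b c P.val (2*i.val+1) = a (i.val+1) := by
      rw [show P.val = 2*i.val from rfl, matD1 (by omega) (by omega) (by omega)]
      congr 1
      omega
    rw [e1, e2]
    simp only [hxP, hxQ, hxM, hxO]
    ring
  have hSQ : (∑ l, typeJ00Mat j a b c Q l * x l)
      = (∑ t ∈ Finset.range j,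
          ((b (i.val+1) * c (t+1) - b (t+1) * c (i.val+1)) / (a (j+1))) * (X (2*t) + X (2*t+1)))
        - a (i.val+1) * x P + ((b (i.val+1)) * x M + c (i.val+1) * x O) := by
    rw [hrowPQ Q (by simp [hQdef]; omega) (by simp [hQdef]; omega)]
    have e1 : matFun j a b c Q.val (2*i.val) = -a (i.val+1) := by
      rw [show Q.val = 2*i.val+1 from rfl, matD2 (by omega) (by omega) (by omega)]
      congr 2
      omega
    have e2 : matFun j a b c Q.val (2*i.val+1) = 0 := by
      rw [show Q.val = 2*i.val+1 from rfl]; exact matDiag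
    rw [e1, e2]
    simp only [hxP, hxQ, hxM, hxO]
    ring
  have hSM : (∑ l, typeJ00Mat j a b c M l * x l)
      = -(∑ t ∈ Finset.range j, b (t+1) * (X (2*t) + X (2*t+1))) + (a (j+1)) * x O := by
    rw [hrow M, Finset.sum_range_succ]
    have e1 : matFun j a b c M.val (2*j) = 0 := by
      rw [show M.val = 2*j from rfl]; exact matDiag
    have e2 : matFun j a b c M.val (2*j+1) = (a (j+1)) := by
      rw [show M.val = 2*j from rfl]; exact matJ1
    rw [e1, e2]
    have hsum : ∑ t ∈ Finset.range j,
        (matFun j a b c M.val (2*t) * X (2*t) + matFun j a b c M.val (2*t+1) * X (2*t+1))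
        = ∑ t ∈ Finset.range j, -(b (t+1) * (X (2*t) + X (2*t+1))) := by
      refine Finset.sum_congr rfl fun t ht => ?_
      have ht1 : t < j := Finset.mem_range.1 ht
      rw [show M.val = 2*j from rfl, matR1 (by omega), matR1 (by omega),
        show 2*t/2 = t by omega, show (2*t+1)/2 = t by omega]
      ring
    rw [hsum, Finset.sum_neg_distrib]
    simp only [hxP, hxQ, hxM, hxO]
    ring
  have hSO : (∑ l, typeJ00Mat j a b c O l * x l)
      = -(∑ t ∈ Finset.range j, c (t+1) * (X (2*t) + X (2*t+1))) - (a (j+1)) * x M := by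
    rw [hrow O, Finset.sum_range_succ]
    have e1 : matFun j a b c O.val (2*j) = -(a (j+1)) := by
      rw [show O.val = 2*j+1 from rfl]; exact matJ2
    have e2 : matFun j a b c O.val (2*j+1) = 0 := by
      rw [show O.val = 2*j+1 from rfl]; exact matDiag
    rw [e1, e2]
    have hsum : ∑ t ∈ Finset.range j,
        (matFun j a b c O.val (2*t) * X (2*t) + matFun j a b c O.val (2*t+1) * X (2*t+1))
        = ∑ t ∈ Finset.range j, -(c (t+1) * (X (2*t) + X (2*t+1))) := by
      refine Finset.sum_congr rfl fun t ht => ?_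
      have ht1 : t < j := Finset.mem_range.1 ht
      rw [show O.val = 2*j+1 from rfl, matR2 (by omega), matR2 (by omega),
        show 2*t/2 = t by omega, show (2*t+1)/2 = t by omega]
      ring
    rw [hsum, Finset.sum_neg_distrib]
    simp only [hxP, hxQ, hxM, hxO]
    ring
  -- the key sum identity
  have hSig : (a (j+1)) * (∑ t ∈ Finset.range j,
        ((b (i.val+1) * c (t+1) - b (t+1) * c (i.val+1)) / (a (j+1))) * (X (2*t) + X (2*t+1)))
      = b (i.val+1) * (∑ t ∈ Finset.range j, c (t+1) * (X (2*t) + X (2*t+1)))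
        - c (i.val+1) * (∑ t ∈ Finset.range j, b (t+1) * (X (2*t) + X (2*t+1))) := by
    rw [Finset.mul_sum, Finset.mul_sum, Finset.mul_sum, ← Finset.sum_sub_distrib]
    refine Finset.sum_congr rfl fun t _ => ?_
    field_simp
  -- rpow identities
  have e1 : (x P + x Q) ^ ((a (j+1)) - 1) * (x P + x Q) = (x P + x Q) ^ (a (j+1)) := by
    rw [Real.rpow_sub_one huP.ne']
    field_simp
  have e2 : (x M) ^ ((-(c (i.val+1))) - 1) * x M = (x M) ^ (-(c (i.val+1))) := by
    rw [Real.rpow_sub_one (hx M).ne', div_mul_cancel₀ _ (hx M).ne']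
  have e3 : (x O) ^ ((b (i.val+1)) - 1) * x O = (x O) ^ (b (i.val+1)) := by
    rw [Real.rpow_sub_one (hx O).ne', div_mul_cancel₀ _ (hx O).ne']
  rw [lieDeriv]
  simp only [hgrad, add_mul, Finset.sum_add_distrib, ite_mul, zero_mul, Finset.sum_ite_eq,
    Finset.mem_univ, if_true, lvField, Pi.zero_apply, zero_add]
  rw [hSP, hSQ, hSM, hSO]
  linear_combination
    ((a (j+1)) * ((x M)^(-(c (i.val+1)))) * ((x O)^(b (i.val+1))) * ((∑ t ∈ Finset.range j, ((b (i.val+1) * c (t+1) - b (t+1) * c (i.val+1)) / (a (j+1))) * (X (2*t) + X (2*t+1))) + (b (i.val+1)) * x M + c (i.val+1) * x O)) * e1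
    + (-(c (i.val+1)) * ((x P + x Q)^(a (j+1))) * ((x O)^(b (i.val+1))) * (-(∑ t ∈ Finset.range j, b (t+1) * (X (2*t) + X (2*t+1))) + (a (j+1)) * x O)) * e2
    + ((b (i.val+1)) * ((x P + x Q)^(a (j+1))) * ((x M)^(-(c (i.val+1)))) * (-(∑ t ∈ Finset.range j, c (t+1) * (X (2*t) + X (2*t+1))) - (a (j+1)) * x M)) * e3
    + (((x P + x Q)^(a (j+1))) * ((x M)^(-(c (i.val+1)))) * ((x O)^(b (i.val+1)))) * hSig
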